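/- The kernel of the homomorphism ψ : G → ℤ with ψ(a) = ψ(b) = ψ(t) = 1, where G = ⟨a, b, t | t⁻¹at = b, t⁻¹bt = aba⁻¹⟩, is a free group of rank 3. -/

import Mathlib

/-- Generators: `0 = a`, `1 = b`, `2 = t`.  Relations of
`⟨a, b, t | t⁻¹at = b, t⁻¹bt = aba⁻¹⟩`. -/
def grels : Set (FreeGroup (Fin 3)) :=
  {(FreeGroup.of 2)⁻¹ * FreeGroup.of 0 * FreeGroup.of 2 * (FreeGroup.of 1)⁻¹,
   (FreeGroup.of 2)⁻¹ * FreeGroup.of 1 * FreeGroup.of 2 *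
     (FreeGroup.of 0 * FreeGroup.of 1 * (FreeGroup.of 0)⁻¹)⁻¹}

namespace Stmt9Aux

open FreeGroup SemidirectProduct

abbrev F3 := FreeGroup (Fin 3)

/-- The automorphism θ : x₀↦x₁, x₁↦x₂, x₂↦x₀⁻¹x₂². -/
def θhom : F3 →* F3 := FreeGroup.lift ![of 1, of 2, (of 0)⁻¹ * of 2 * of 2]

def θinv : F3 →* F3 := FreeGroup.lift ![of 1 * of 1 * (of 2)⁻¹, of 0, of 1]

lemma θ_left_inv : θinv.comp θhom = MonoidHom.id F3 := by
  apply FreeGroup.ext_hom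
  intro a
  fin_cases a <;> simp [θhom, θinv, mul_assoc]

lemma θ_right_inv : θhom.comp θinv = MonoidHom.id F3 := by
  apply FreeGroup.ext_hom
  intro a
  fin_cases a <;> simp [θhom, θinv, mul_assoc]

def θ : MulAut F3 :=
  MulEquiv.mk' ⟨θhom, fun x => θinv x,
    fun x => congrArg (· x) θ_left_inv, fun x => congrArg (· x) θ_right_inv⟩
    (map_mul θhom)

lemma θh0 : θhom (of 0) = of 1 := by simp only [θhom, FreeGroup.lift_apply_of]; rfl
lemma θh1 : θhom (of 1) = of 2 := by simp only [θhom, FreeGroup.lift_apply_of]; rfl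
lemma θh2 : θhom (of 2) = (of 0)⁻¹ * of 2 * of 2 := by
  simp only [θhom, FreeGroup.lift_apply_of]; rfl

lemma θinv_θhom (x : F3) : θinv (θhom x) = x := congrArg (fun f : F3 →* F3 => f x) θ_left_inv
lemma θhom_θinv (x : F3) : θhom (θinv x) = x := congrArg (fun f : F3 →* F3 => f x) θ_right_inv

lemma θ_apply (x : F3) : θ x = θhom x := rfl
lemma θ_inv_apply (x : F3) : θ⁻¹ x = θinv x := rfl
lemma θ_symm_apply (x : F3) : θ.symm x = θinv x := rfl
lemma θi0 : θinv (of 0) = of 1 * of 1 * (of 2)⁻¹ := by simp only [θinv, FreeGroup.lift_apply_of]; rfl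
lemma θi1 : θinv (of 1) = of 0 := by simp only [θinv, FreeGroup.lift_apply_of]; rfl
lemma θi2 : θinv (of 2) = of 1 := by simp only [θinv, FreeGroup.lift_apply_of]; rfl

def φz : Multiplicative ℤ →* MulAut F3 := zpowersHom _ θ

lemma φz_apply (g : Multiplicative ℤ) : φz g = θ ^ (Multiplicative.toAdd g) := rfl

abbrev H := F3 ⋊[φz] Multiplicative ℤ

def T : H := inr (Multiplicative.ofAdd 1)

/-- images of a, b, t in H -/
def fgen : Fin 3 → H := ![inl (of 2) * T, inl (of 1) * T, T]

lemma relators_map_one : ∀ r ∈ grels, FreeGroup.lift fgen r = 1 := by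
  intro r hr
  rcases hr with h | h <;> subst h <;>
    · simp only [_root_.map_mul, _root_.map_inv, FreeGroup.lift_apply_of]
      ext <;>
        simp [fgen, T, φz_apply, mul_left, mul_right, inv_left, inv_right, zpowersHom_apply,
          θ_apply, θ_inv_apply, θh0, θh1, θh2, θi0, θi1, θi2, θinv_θhom, θhom_θinv, _root_.map_mul, _root_.map_inv,
          mul_assoc]

abbrev G := PresentedGroup grels

def Φ : G →* H := PresentedGroup.toGroup relators_map_one

def A : G := PresentedGroup.of 0
def B : G := PresentedGroup.of 1
def Tg : G := PresentedGroup.of 2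

lemma grel1 : Tg⁻¹ * A * Tg * B⁻¹ = 1 := by
  have : ((QuotientGroup.mk ((FreeGroup.of 2)⁻¹ * FreeGroup.of 0 * FreeGroup.of 2 *
      (FreeGroup.of 1)⁻¹ : FreeGroup (Fin 3))) : G) = 1 := by
    rw [QuotientGroup.eq_one_iff]
    exact Subgroup.subset_normalClosure (Or.inl rfl)
  simp only [A, B, Tg, PresentedGroup.of, ← _root_.map_inv, ← _root_.map_mul]; exact this

lemma grel2 : Tg⁻¹ * B * Tg * (A * B * A⁻¹)⁻¹ = 1 := by
  have : ((QuotientGroup.mk ((FreeGroup.of 2)⁻¹ * FreeGroup.of 1 * FreeGroup.of 2 *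
      (FreeGroup.of 0 * FreeGroup.of 1 * (FreeGroup.of 0)⁻¹)⁻¹ : FreeGroup (Fin 3))) : G) = 1 := by
    rw [QuotientGroup.eq_one_iff]
    exact Subgroup.subset_normalClosure (Or.inr rfl)
  simp only [A, B, Tg, PresentedGroup.of, ← _root_.map_inv, ← _root_.map_mul]; exact this

lemma rel1 : Tg⁻¹ * A * Tg = B := mul_inv_eq_one.mp grel1

lemma rel2 : Tg⁻¹ * B * Tg = A * B * A⁻¹ := mul_inv_eq_one.mp grel2

/-- the free-group part of the inverse map -/
def fa : F3 →* G := FreeGroup.lift ![Tg⁻¹ * Tg⁻¹ * A * Tg, Tg⁻¹ * A, A * Tg⁻¹]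

lemma fa0 : fa (of 0) = Tg⁻¹ * Tg⁻¹ * A * Tg := by
  simp only [fa, FreeGroup.lift_apply_of]; rfl

lemma fa1 : fa (of 1) = Tg⁻¹ * A := by
  simp only [fa, FreeGroup.lift_apply_of]; rfl

lemma fa2 : fa (of 2) = A * Tg⁻¹ := by
  simp only [fa, FreeGroup.lift_apply_of]; rfl


lemma conjA : Tg * A * Tg⁻¹ * A = B * (Tg * A * Tg⁻¹) := by
  have h1 : A * (Tg⁻¹ * A * Tg) = (Tg⁻¹ * B * Tg) * A := by rw [rel1, rel2]; simp [mul_assoc, mul_inv_rev]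
  calc Tg * A * Tg⁻¹ * A
      = Tg * (A * (Tg⁻¹ * A * Tg)) * Tg⁻¹ := by simp [mul_assoc, mul_inv_rev]
    _ = Tg * ((Tg⁻¹ * B * Tg) * A) * Tg⁻¹ := by rw [h1]
    _ = B * (Tg * A * Tg⁻¹) := by simp [mul_assoc, mul_inv_rev]

lemma fa_theta_hom : fa.comp θhom = (MulAut.conj Tg).toMonoidHom.comp fa := by
  apply FreeGroup.ext_hom
  intro a
  fin_cases a
  · show fa (θhom (of 0)) = Tg * fa (of 0) * Tg⁻¹
    rw [θh0, fa1, fa0]; simp [mul_assoc, mul_inv_rev]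
  · show fa (θhom (of 1)) = Tg * fa (of 1) * Tg⁻¹
    rw [θh1, fa2, fa1]; simp [mul_assoc, mul_inv_rev]
  · show fa (θhom (of 2)) = Tg * fa (of 2) * Tg⁻¹
    rw [θh2, _root_.map_mul, _root_.map_mul, _root_.map_inv, fa0, fa2]
    calc (Tg⁻¹ * Tg⁻¹ * A * Tg)⁻¹ * (A * Tg⁻¹) * (A * Tg⁻¹)
        = Tg⁻¹ * A⁻¹ * Tg * (Tg * A * Tg⁻¹ * A) * Tg⁻¹ := by simp [mul_assoc, mul_inv_rev]
      _ = Tg⁻¹ * A⁻¹ * Tg * (B * (Tg * A * Tg⁻¹)) * Tg⁻¹ := by rw [conjA]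
      _ = (Tg⁻¹ * A * Tg)⁻¹ * B * (Tg * A * Tg⁻¹) * Tg⁻¹ := by simp [mul_assoc, mul_inv_rev]
      _ = B⁻¹ * B * (Tg * A * Tg⁻¹) * Tg⁻¹ := by rw [rel1]
      _ = Tg * (A * Tg⁻¹) * Tg⁻¹ := by simp [mul_assoc, mul_inv_rev]

lemma fa_theta (w : F3) : fa (θ w) = Tg * fa w * Tg⁻¹ := by
  have := congrArg (fun f : F3 →* G => f w) fa_theta_hom
  simpa [θ_apply] using this


lemma fa_theta_inv (w : F3) : fa (θ⁻¹ w) = Tg⁻¹ * fa w * Tg := by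
  have h := fa_theta (θ⁻¹ w)
  have h2 : θ (θ⁻¹ w) = w := θ.apply_symm_apply w
  rw [h2] at h
  rw [h]; simp [mul_assoc, mul_inv_rev]

lemma fa_zpow (k : ℤ) (w : F3) : fa ((θ ^ k) w) = Tg ^ k * fa w * Tg ^ (-k) := by
  induction k using Int.induction_on with
  | zero => simp
  | succ n ih =>
      have : (θ ^ ((n : ℤ) + 1)) w = θ ((θ ^ (n : ℤ)) w) := by
        rw [show ((n : ℤ) + 1) = 1 + (n : ℤ) by ring, zpow_add, zpow_one, MulAut.mul_apply]
      rw [this, fa_theta, ih]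
      group
  | pred n ih =>
      have : (θ ^ (-(n : ℤ) - 1)) w = θ⁻¹ ((θ ^ (-(n : ℤ))) w) := by
        rw [show -(n : ℤ) - 1 = -1 + -(n : ℤ) by ring, zpow_add, zpow_neg_one,
          MulAut.mul_apply]
      rw [this, fa_theta_inv, ih]
      group

lemma compat : ∀ g : Multiplicative ℤ,
    fa.comp (φz g).toMonoidHom =
      (MulAut.conj (zpowersHom G Tg g)).toMonoidHom.comp fa := by
  intro g
  refine MonoidHom.ext fun w => ?_
  show fa ((φz g) w) = Tg ^ g.toAdd * fa w * (Tg ^ g.toAdd)⁻¹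
  have : φz g = θ ^ g.toAdd := rfl
  rw [this, fa_zpow, zpow_neg]

def Ψ : H →* G := SemidirectProduct.lift fa (zpowersHom G Tg) compat

lemma Ψ_inl (w : F3) : Ψ (inl w) = fa w := by simp [Ψ]

lemma Ψ_inr (z : Multiplicative ℤ) : Ψ (inr z) = zpowersHom G Tg z := by simp [Ψ]

lemma Φ_of (i : Fin 3) : Φ (PresentedGroup.of i) = fgen i :=
  PresentedGroup.toGroup.of relators_map_one

lemma Ψ_T : Ψ T = Tg := by
  simp [Ψ, T, zpowersHom_apply]

lemma ΨΦ : Ψ.comp Φ = MonoidHom.id G := by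
  apply PresentedGroup.ext
  intro i
  rw [MonoidHom.comp_apply, Φ_of, MonoidHom.id_apply]
  fin_cases i
  · show Ψ (inl (of 2) * T) = A
    rw [_root_.map_mul, Ψ_inl, Ψ_T, fa2]
    simp [mul_assoc]
  · show Ψ (inl (of 1) * T) = B
    rw [_root_.map_mul, Ψ_inl, Ψ_T, fa1, ← rel1]
  · show Ψ T = Tg
    exact Ψ_T

lemma Φ_Tg : Φ Tg = T := Φ_of 2
lemma Φ_A : Φ A = inl (of 2) * T := Φ_of 0

lemma Φ_zpowers (z : Multiplicative ℤ) : Φ (zpowersHom G Tg z) = inr z := by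
  have h : Φ.comp (zpowersHom G Tg) = (inr : Multiplicative ℤ →* H) := by
    apply MonoidHom.ext_mint
    simp [zpowersHom_apply, Φ_Tg, T]
  exact congrArg (fun f : Multiplicative ℤ →* H => f z) h

lemma ΦΨ_inl (w : F3) : Φ (Ψ (inl w)) = inl w := by
  have : (Φ.comp Ψ).comp inl = (inl : F3 →* H) := by
    apply FreeGroup.ext_hom
    intro i
    fin_cases i
    · show Φ (Ψ (inl (of 0))) = inl (of 0)
      rw [Ψ_inl, fa0]
      simp only [_root_.map_mul, _root_.map_inv, Φ_Tg, Φ_A]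
      ext <;>
        simp [T, φz_apply, mul_left, mul_right, inv_left, inv_right, zpowersHom_apply,
          θ_apply, θ_inv_apply, θ_symm_apply, θh0, θh1, θh2, θi0, θi1, θi2, θinv_θhom, θhom_θinv,
          _root_.map_mul, _root_.map_inv, mul_assoc]
    · show Φ (Ψ (inl (of 1))) = inl (of 1)
      rw [Ψ_inl, fa1]
      simp only [_root_.map_mul, _root_.map_inv, Φ_Tg, Φ_A]
      ext <;>
        simp [T, φz_apply, mul_left, mul_right, inv_left, inv_right, zpowersHom_apply,
          θ_apply, θ_inv_apply, θ_symm_apply, θh0, θh1, θh2, θi0, θi1, θi2, θinv_θhom, θhom_θinv,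
          _root_.map_mul, _root_.map_inv, mul_assoc]
    · show Φ (Ψ (inl (of 2))) = inl (of 2)
      rw [Ψ_inl, fa2]
      simp only [_root_.map_mul, _root_.map_inv, Φ_Tg, Φ_A]
      ext <;>
        simp [T, φz_apply, mul_left, mul_right, inv_left, inv_right, zpowersHom_apply,
          θ_apply, θ_inv_apply, θ_symm_apply, θh0, θh1, θh2, θi0, θi1, θi2, θinv_θhom, θhom_θinv,
          _root_.map_mul, _root_.map_inv, mul_assoc]
  exact congrArg (fun f : F3 →* H => f w) this

lemma ΦΨ : Φ.comp Ψ = MonoidHom.id H := by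
  refine MonoidHom.ext fun x => ?_
  show Φ (Ψ x) = x
  calc Φ (Ψ x) = Φ (Ψ (inl x.left * inr x.right)) := by rw [inl_left_mul_inr_right]
    _ = Φ (Ψ (inl x.left)) * Φ (Ψ (inr x.right)) := by rw [_root_.map_mul, _root_.map_mul]
    _ = inl x.left * inr x.right := by rw [ΦΨ_inl, Ψ_inr, Φ_zpowers]
    _ = x := inl_left_mul_inr_right x

noncomputable def e : G ≃* H := MonoidHom.toMulEquiv Φ Ψ ΨΦ ΦΨ

end Stmt9Aux

theorem stmt_9 (ψ : PresentedGroup grels →* Multiplicative ℤ)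
    (ht : ψ (PresentedGroup.of 2) = Multiplicative.ofAdd 1)
    (ha : ψ (PresentedGroup.of 0) = Multiplicative.ofAdd 1)
    (hb : ψ (PresentedGroup.of 1) = Multiplicative.ofAdd 1) :
    Nonempty (ψ.ker ≃* FreeGroup (Fin 3)) := by
  classical
  open Stmt9Aux SemidirectProduct in
  refine ⟨?_⟩
  have hψ : ψ = (rightHom : Stmt9Aux.H →* Multiplicative ℤ).comp Stmt9Aux.Φ := by
    apply PresentedGroup.ext
    intro i
    rw [MonoidHom.comp_apply, Stmt9Aux.Φ_of]
    fin_cases i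
    · show ψ (PresentedGroup.of 0) = rightHom (Stmt9Aux.fgen 0)
      rw [ha]; simp [Stmt9Aux.fgen, Stmt9Aux.T]
    · show ψ (PresentedGroup.of 1) = rightHom (Stmt9Aux.fgen 1)
      rw [hb]; simp [Stmt9Aux.fgen, Stmt9Aux.T]
    · show ψ (PresentedGroup.of 2) = rightHom (Stmt9Aux.fgen 2)
      rw [ht]; simp [Stmt9Aux.fgen, Stmt9Aux.T]
  have hcoe : (Stmt9Aux.e : PresentedGroup grels →* Stmt9Aux.H) = Stmt9Aux.Φ := rfl
  have hker : ψ.ker = Subgroup.comap (Stmt9Aux.e : PresentedGroup grels →* Stmt9Aux.H)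
      (rightHom : Stmt9Aux.H →* Multiplicative ℤ).ker := by
    rw [hcoe, hψ, MonoidHom.comap_ker]
  have hmap : Subgroup.map (Stmt9Aux.e : PresentedGroup grels →* Stmt9Aux.H) ψ.ker =
      (rightHom : Stmt9Aux.H →* Multiplicative ℤ).ker := by
    rw [hker]
    exact Subgroup.map_comap_eq_self_of_surjective Stmt9Aux.e.surjective _
  have e1 : ψ.ker ≃* (rightHom : Stmt9Aux.H →* Multiplicative ℤ).ker :=
    (Stmt9Aux.e.subgroupMap ψ.ker).trans (MulEquiv.subgroupCongr hmap)
  have e2 : (inl : FreeGroup (Fin 3) →* Stmt9Aux.H).range ≃*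
      (rightHom : Stmt9Aux.H →* Multiplicative ℤ).ker :=
    MulEquiv.subgroupCongr range_inl_eq_ker_rightHom
  have e3 : FreeGroup (Fin 3) ≃* (inl : FreeGroup (Fin 3) →* Stmt9Aux.H).range :=
    MonoidHom.ofInjective inl_injective
  exact e1.trans (e2.symm.trans (e3.symm))
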